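/- Let λ and μ be admissible weight diagrams in the same block. Then λ ≤ μ in the Bruhat order generated by type A moves (replacing a neighboured pair ∨∧ by ∧∨) and type D moves (replacing an initial neighboured pair ∧∧ by ∨∨) if and only if l_i(λ,μ) ≥ 0 for all i ≥ 0, where l_i(λ,μ) is defined as follows: if μ has m symbols ∧ and λ has m+2k symbols ∧, set l_0(λ,μ)=2k, and for i > 0 set l_i(λ,μ)=0 if λ(i)∈{×,∘}, and otherwise l_i(λ,μ) = 2k + #{j ≤ i : λ(j)=∨} − #{j ≤ i : μ(j)=∨}. -/

import Mathlib

/-- The symbols `×, ∘, ∨, ∧, ◇` of a weight diagram. -/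
inductive Symb : Type
  | x | o | dn | up | dia
  deriving DecidableEq

/-- A weight diagram: a labelling of the vertices of the nonnegative (half-)integer line
(enumerated by `ℕ`) by symbols. -/
abbrev WD := ℕ → Symb

/-- The diamond `◇` can only occur at the leftmost vertex. -/
def DiaOnlyZero (w : WD) : Prop := ∀ n, w n = Symb.dia → n = 0

/-- Position `0` may only carry `∘` or `◇`. -/
def ZeroConstraint (w : WD) : Prop := w 0 = Symb.o ∨ w 0 = Symb.dia

/-- A weight diagram is admissible if it has only finitely many symbols `∘`, `×`, `∧`. -/
def Admissible (w : WD) : Prop :=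
  {n : ℕ | w n = Symb.o ∨ w n = Symb.x ∨ w n = Symb.up}.Finite

/-- Two positions are neighboured if they are separated only by `∘`'s and `×`'s. -/
def Neigh (w : WD) (i j : ℕ) : Prop :=
  i < j ∧ ∀ k, i < k → k < j → w k = Symb.o ∨ w k = Symb.x

/-- A type A Bruhat move: a neighboured pair `∨∧` is replaced by `∧∨`
(a `◇` may be read as `∨`, in which case the diamond is kept and the `∧` becomes `∨`). -/
def TypeAMove (w w' : WD) : Prop :=
  ∃ i j, Neigh w i j ∧ (∀ k, k ≠ i → k ≠ j → w' k = w k) ∧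
    w j = Symb.up ∧ w' j = Symb.dn ∧
    ((w i = Symb.dn ∧ w' i = Symb.up) ∨ (w i = Symb.dia ∧ w' i = Symb.dia))

/-- A type D Bruhat move: an initial neighboured pair `∧∧` is replaced by `∨∨`. -/
def TypeDMove (w w' : WD) : Prop :=
  ∃ i j, Neigh w i j ∧ (∀ k, k < i → w k = Symb.o ∨ w k = Symb.x) ∧
    (∀ k, k ≠ i → k ≠ j → w' k = w k) ∧
    w i = Symb.up ∧ w j = Symb.up ∧ w' i = Symb.dn ∧ w' j = Symb.dn

/-- A Bruhat move is a type A or a type D move. -/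
def BruhatMove (w w' : WD) : Prop := TypeAMove w w' ∨ TypeDMove w w'

/-- The Bruhat order: `λ ≤ μ` iff `μ` is obtained from `λ` by a finite sequence of
Bruhat moves. -/
def BruhatLE : WD → WD → Prop := Relation.ReflTransGen BruhatMove

/-- The number of `∧`'s of a weight diagram. -/
noncomputable def upCount (w : WD) : ℕ := Nat.card {n : ℕ | w n = Symb.up}

/-- The number of `∨`'s of `w` at positions `≤ i`. -/
def dnUpTo (w : WD) (i : ℕ) : ℕ :=
  ((Finset.range (i + 1)).filter fun j => w j = Symb.dn).card

/-- The statistics `l_i(λ,μ)`: `l_0(λ,μ) = 2k` where `λ` has `2k` more `∧`'s than `μ`;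
for `i > 0`, `l_i(λ,μ) = 0` if `λ(i) ∈ {×,∘}`, and otherwise
`l_i(λ,μ) = 2k + #{j ≤ i : λ(j) = ∨} - #{j ≤ i : μ(j) = ∨}`. -/
noncomputable def lstat (lam mu : WD) : ℕ → ℤ
  | 0 => (upCount lam : ℤ) - (upCount mu : ℤ)
  | i + 1 =>
    if lam (i + 1) = Symb.o ∨ lam (i + 1) = Symb.x then 0
    else (upCount lam : ℤ) - (upCount mu : ℤ)
      + (dnUpTo lam (i + 1) : ℤ) - (dnUpTo mu (i + 1) : ℤ)

/-- Two weight diagrams belong to the same block: the positions of `∘`'s and `×`'s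
(and of the diamond) agree, and either the numbers of `∧`'s are congruent mod `2`
or both diagrams start with `◇`. -/
def SameBlock (lam mu : WD) : Prop :=
  (∀ n, lam n = Symb.o ↔ mu n = Symb.o) ∧
  (∀ n, lam n = Symb.x ↔ mu n = Symb.x) ∧
  (lam 0 = Symb.dia ↔ mu 0 = Symb.dia) ∧
  (upCount lam % 2 = upCount mu % 2 ∨ (lam 0 = Symb.dia ∧ mu 0 = Symb.dia))

namespace Aux
open Symb Finset

/-- integer count of symbol `c` among positions `< n`. -/
def cnt (w : WD) (n : ℕ) (c : Symb) : ℤ := ∑ j ∈ Finset.range n, if w j = c then 1 else 0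

lemma cnt_succ (w : WD) (n : ℕ) (c : Symb) :
    cnt w (n+1) c = cnt w n c + (if w n = c then 1 else 0) := by
  simp only [cnt, Finset.sum_range_succ]

lemma cnt_nonneg (w : WD) (n : ℕ) (c : Symb) : 0 ≤ cnt w n c := by
  refine Finset.sum_nonneg fun j _ => ?_
  split <;> norm_num

lemma cnt_congr {w w' : WD} {n : ℕ} (c : Symb) (h : ∀ j, j < n → w j = w' j) :
    cnt w n c = cnt w' n c := by
  refine Finset.sum_congr rfl fun j hj => ?_
  rw [h j (Finset.mem_range.mp hj)]

lemma cnt_congr_iff {w w' : WD} {n : ℕ} (c : Symb) (h : ∀ j, w j = c ↔ w' j = c) :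
    cnt w n c = cnt w' n c := by
  refine Finset.sum_congr rfl fun j _ => ?_
  by_cases hc : w j = c
  · rw [if_pos hc, if_pos ((h j).mp hc)]
  · rw [if_neg hc, if_neg (fun hc' => hc ((h j).mpr hc'))]

lemma dnUpTo_cast (w : WD) (i : ℕ) : (dnUpTo w i : ℤ) = cnt w (i+1) Symb.dn := by
  rw [dnUpTo, Finset.card_filter, cnt]
  push_cast
  rfl

lemma cnt_total (w : WD) (n : ℕ) :
    cnt w n Symb.x + cnt w n Symb.o + cnt w n Symb.dn + cnt w n Symb.up + cnt w n Symb.dia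
      = n := by
  induction n with
  | zero => simp [cnt]
  | succ n ih =>
    rw [cnt_succ, cnt_succ, cnt_succ, cnt_succ, cnt_succ]
    cases h : w n <;> simp_all <;> omega

/-- `N` bounds the support: everything from `N` on is `∨`. -/
def IsBound (w : WD) (N : ℕ) : Prop := ∀ p, N ≤ p → w p = Symb.dn

lemma exists_bound {w : WD} (ha : Admissible w) (hd : DiaOnlyZero w) :
    ∃ N, 0 < N ∧ IsBound w N := by
  classical
  refine ⟨ha.toFinset.sup id + 1, Nat.succ_pos _, fun p hp => ?_⟩
  have hpmem : p ∉ ha.toFinset := by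
    intro hmem
    have := Finset.le_sup (f := id) hmem
    simp only [id_eq] at this
    omega
  have hnot : ¬(w p = Symb.o ∨ w p = Symb.x ∨ w p = Symb.up) := by
    exact fun h => hpmem ((Set.Finite.mem_toFinset (hs := ha)).mpr h)
  have hp0 : p ≠ 0 := by omega
  cases h : w p
  · exact absurd (Or.inr (Or.inl h)) hnot
  · exact absurd (Or.inl h) hnot
  · rfl
  · exact absurd (Or.inr (Or.inr h)) hnot
  · exact absurd (hd p h) hp0

lemma cnt_stable {w : WD} {N : ℕ} (hN : IsBound w N) (c : Symb)
    (hc : c ≠ Symb.dn) : ∀ n, N ≤ n → cnt w n c = cnt w N c := by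
  intro n
  induction n with
  | zero => intro hn; have h0 : N = 0 := by omega
            rw [h0]
  | succ n ih =>
    intro hn
    rcases Nat.lt_or_ge N (n+1) with h | h
    · have hn' : N ≤ n := by omega
      rw [cnt_succ, ih hn', if_neg (by rw [hN n hn']; exact fun h => hc h.symm), add_zero]
    · have h1 : N = n+1 := by omega
      rw [h1]

lemma upCount_cast {w : WD} {N : ℕ} (hN : IsBound w N) :
    (upCount w : ℤ) = cnt w N Symb.up := by
  classical
  have hset : {n : ℕ | w n = Symb.up} = ↑((Finset.range N).filter fun j => w j = Symb.up) := by
    ext n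
    simp only [Set.mem_setOf_eq, Finset.coe_filter, Finset.mem_range, Set.mem_setOf_eq]
    constructor
    · intro h
      refine ⟨?_, h⟩
      by_contra hn
      rw [hN n (by omega)] at h
      exact absurd h (by simp)
    · exact fun h => h.2
  rw [upCount, hset, Nat.card_coe_set_eq, Set.ncard_coe_finset,
    Finset.card_filter, cnt]
  push_cast
  rfl


lemma cnt_off1 {w w' : WD} {a : ℕ} (hoff : ∀ k, k ≠ a → w' k = w k) (n : ℕ) (c : Symb) :
    cnt w' n c = cnt w n c + (if a < n then
      ((if w' a = c then (1:ℤ) else 0) - (if w a = c then 1 else 0)) else 0) := by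
  induction n with
  | zero => simp [cnt]
  | succ n ih =>
    by_cases hn : n = a
    · subst hn
      rw [cnt_succ, cnt_succ, ih, if_neg (lt_irrefl n), if_pos (Nat.lt_succ_self n)]
      ring
    · rw [cnt_succ, cnt_succ, ih, hoff n hn]
      by_cases h : a < n
      · have h2 : a < n + 1 := by omega
        rw [if_pos h, if_pos h2]
        ring
      · have h2 : ¬ a < n + 1 := by omega
        rw [if_neg h, if_neg h2]
        ring

lemma cnt_off2 {w w' : WD} {a b : ℕ} (hab : a ≠ b)
    (hoff : ∀ k, k ≠ a → k ≠ b → w' k = w k) (n : ℕ) (c : Symb) :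
    cnt w' n c = cnt w n c
      + (if a < n then ((if w' a = c then (1:ℤ) else 0) - (if w a = c then 1 else 0)) else 0)
      + (if b < n then ((if w' b = c then (1:ℤ) else 0) - (if w b = c then 1 else 0)) else 0) := by
  classical
  set w'' : WD := Function.update w a (w' a) with hw''
  have h1 : ∀ k, k ≠ a → w'' k = w k := fun k hk => Function.update_of_ne hk _ _
  have h2 : ∀ k, k ≠ b → w' k = w'' k := by
    intro k hk
    by_cases hka : k = a
    · subst hka; simp [hw'']
    · rw [hoff k hka hk, h1 k hka]
  have ha'' : w'' a = w' a := by simp [hw'']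
  have hb'' : w'' b = w b := h1 b (fun h => hab h.symm)
  rw [cnt_off1 h2 n c, cnt_off1 h1 n c, ha'', hb'']

/-- The running statistic `t_p`. -/
noncomputable def tf (lam mu : WD) (p : ℕ) : ℤ :=
  (upCount lam : ℤ) - (upCount mu : ℤ) + cnt lam (p+1) Symb.dn - cnt mu (p+1) Symb.dn

lemma lstat_zero (lam mu : WD) : lstat lam mu 0 = (upCount lam : ℤ) - (upCount mu : ℤ) := rfl

lemma lstat_eq_tf {lam mu : WD} {p : ℕ} (hp : 0 < p)
    (h : ¬(lam p = Symb.o ∨ lam p = Symb.x)) : lstat lam mu p = tf lam mu p := by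
  obtain ⟨q, rfl⟩ := Nat.exists_eq_add_of_lt hp
  simp only [Nat.zero_add] at *
  rw [lstat, if_neg h, tf, dnUpTo_cast, dnUpTo_cast]

lemma lstat_eq_zero {lam mu : WD} {p : ℕ} (hp : 0 < p)
    (h : lam p = Symb.o ∨ lam p = Symb.x) : lstat lam mu p = 0 := by
  obtain ⟨q, rfl⟩ := Nat.exists_eq_add_of_lt hp
  simp only [Nat.zero_add] at *
  rw [lstat, if_pos h]

lemma tf_succ (lam mu : WD) (p : ℕ) :
    tf lam mu (p+1) = tf lam mu p + (if lam (p+1) = Symb.dn then 1 else 0)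
      - (if mu (p+1) = Symb.dn then 1 else 0) := by
  simp only [tf, cnt_succ]
  ring

lemma tf_zero {lam mu : WD} (hlz : ZeroConstraint lam) (hmz : ZeroConstraint mu) :
    tf lam mu 0 = (upCount lam : ℤ) - (upCount mu : ℤ) := by
  have h1 : lam 0 ≠ Symb.dn := by rcases hlz with h | h <;> rw [h] <;> simp
  have h2 : mu 0 ≠ Symb.dn := by rcases hmz with h | h <;> rw [h] <;> simp
  simp only [tf, cnt, Finset.sum_range_succ, Finset.sum_range_zero, if_neg h1, if_neg h2]
  ring

/-- nonnegativity of `tf` from nonnegativity of `lstat`. -/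
lemma tf_nonneg {lam mu : WD} (hlz : ZeroConstraint lam) (hmz : ZeroConstraint mu)
    (hoxo : ∀ n, lam n = Symb.o ↔ mu n = Symb.o) (hoxx : ∀ n, lam n = Symb.x ↔ mu n = Symb.x)
    (H : ∀ i, 0 ≤ lstat lam mu i) : ∀ p, 0 ≤ tf lam mu p := by
  intro p
  induction p with
  | zero => rw [tf_zero hlz hmz]; exact H 0
  | succ p ih =>
    by_cases h : lam (p+1) = Symb.o ∨ lam (p+1) = Symb.x
    · have h1 : lam (p+1) ≠ Symb.dn := by rcases h with h | h <;> rw [h] <;> simp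
      have h2 : mu (p+1) ≠ Symb.dn := by
        rcases h with h | h
        · rw [(hoxo (p+1)).mp h]; simp
        · rw [(hoxx (p+1)).mp h]; simp
      rw [tf_succ, if_neg h1, if_neg h2]
      omega
    · rw [← lstat_eq_tf (Nat.succ_pos p) h]
      exact H (p+1)

/-- monotonicity of `tf` on stretches of `lam` without `∧` or `◇`. -/
lemma tf_mono {lam mu : WD}
    (hoxo : ∀ n, lam n = Symb.o ↔ mu n = Symb.o) (hoxx : ∀ n, lam n = Symb.x ↔ mu n = Symb.x)
    (hld : DiaOnlyZero lam) {a : ℕ} :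
    ∀ b, a ≤ b → (∀ q, a < q → q ≤ b → lam q ≠ Symb.up) → tf lam mu a ≤ tf lam mu b := by
  intro b
  induction b with
  | zero => intro h _; have : a = 0 := by omega
            rw [this]
  | succ b ih =>
    intro hab hnup
    rcases Nat.lt_or_ge a (b+1) with h | h
    · have hab' : a ≤ b := by omega
      have step : tf lam mu b ≤ tf lam mu (b+1) := by
        rw [tf_succ]
        cases hq : lam (b+1)
        · rw [(hoxx (b+1)).mp hq]; simp
        · rw [(hoxo (b+1)).mp hq]; simp
        · have h1 : (if mu (b+1) = Symb.dn then (1:ℤ) else 0) ≤ 1 := by split <;> norm_num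
          have h2 : (if (Symb.dn = Symb.dn) then (1:ℤ) else 0) = 1 := by norm_num
          rw [h2]
          omega
        · exact absurd hq (hnup (b+1) h (le_refl _))
        · exact absurd (hld (b+1) hq) (Nat.succ_ne_zero b)
      exact le_trans (ih hab' (fun q hq hq' => hnup q hq (by omega))) step
    · have : a = b+1 := by omega
      rw [this]

lemma exists_up_of_tf_lt {lam mu : WD}
    (hoxo : ∀ n, lam n = Symb.o ↔ mu n = Symb.o) (hoxx : ∀ n, lam n = Symb.x ↔ mu n = Symb.x)
    (hld : DiaOnlyZero lam) {a b : ℕ} (hab : a ≤ b) (h : tf lam mu b < tf lam mu a) :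
    ∃ q, a < q ∧ q ≤ b ∧ lam q = Symb.up := by
  by_contra hc
  push_neg at hc
  exact absurd (tf_mono hoxo hoxx hld b hab (fun q h1 h2 hq => hc q h1 h2 hq)) (by omega)

/-- `tf` vanishes beyond a common bound. -/
lemma tf_large {lam mu : WD} {N : ℕ} (hNl : IsBound lam N) (hNm : IsBound mu N)
    (hld : DiaOnlyZero lam) (hmd : DiaOnlyZero mu)
    (hoxo : ∀ n, lam n = Symb.o ↔ mu n = Symb.o) (hoxx : ∀ n, lam n = Symb.x ↔ mu n = Symb.x)
    (hdia : lam 0 = Symb.dia ↔ mu 0 = Symb.dia) {p : ℕ} (hp : N ≤ p) :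
    tf lam mu p = 0 := by
  have hdia' : ∀ n, lam n = Symb.dia ↔ mu n = Symb.dia := by
    intro n
    by_cases hn : n = 0
    · subst hn; exact hdia
    · constructor
      · intro h; exact absurd (hld n h) hn
      · intro h; exact absurd (hmd n h) hn
  have ho : cnt lam (p+1) Symb.o = cnt mu (p+1) Symb.o := cnt_congr_iff _ hoxo
  have hx : cnt lam (p+1) Symb.x = cnt mu (p+1) Symb.x := cnt_congr_iff _ hoxx
  have hd : cnt lam (p+1) Symb.dia = cnt mu (p+1) Symb.dia := cnt_congr_iff _ hdia'
  have hul : (upCount lam : ℤ) = cnt lam (p+1) Symb.up := by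
    rw [upCount_cast hNl, cnt_stable hNl Symb.up (by simp) (p+1) (by omega)]
  have hum : (upCount mu : ℤ) = cnt mu (p+1) Symb.up := by
    rw [upCount_cast hNm, cnt_stable hNm Symb.up (by simp) (p+1) (by omega)]
  have t1 := cnt_total lam (p+1)
  have t2 := cnt_total mu (p+1)
  rw [tf, hul, hum]
  omega


lemma match_off2 {w w' : WD} {a b : ℕ} (c : Symb)
    (hoff : ∀ k, k ≠ a → k ≠ b → w' k = w k)
    (h1 : w a ≠ c) (h2 : w' a ≠ c) (h3 : w b ≠ c) (h4 : w' b ≠ c) :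
    ∀ n, w n = c ↔ w' n = c := by
  intro n
  by_cases hna : n = a
  · subst hna; exact ⟨fun h => absurd h h1, fun h => absurd h h2⟩
  · by_cases hnb : n = b
    · subst hnb; exact ⟨fun h => absurd h h3, fun h => absurd h h4⟩
    · rw [hoff n hna hnb]

lemma admissible_off2 {w w' : WD} {a b : ℕ}
    (hoff : ∀ k, k ≠ a → k ≠ b → w' k = w k) (hadm : Admissible w) : Admissible w' := by
  refine Set.Finite.subset (Set.Finite.union hadm ((Set.finite_singleton b).insert a)) ?_
  intro n hn
  by_cases hna : n = a
  · right; rw [hna]; exact Set.mem_insert a {b}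
  · by_cases hnb : n = b
    · right; rw [hnb]; exact Set.mem_insert_of_mem a rfl
    · left
      simp only [Set.mem_setOf_eq] at hn ⊢
      rwa [hoff n hna hnb] at hn

lemma isBound_off2 {w w' : WD} {a b N : ℕ} (haN : a < N) (hbN : b < N)
    (hoff : ∀ k, k ≠ a → k ≠ b → w' k = w k) (hN : IsBound w N) : IsBound w' N := by
  intro p hp
  rw [hoff p (by omega) (by omega)]
  exact hN p hp

lemma shapeA_facts {w w' : WD} {a b N : ℕ} (hab : a < b)
    (hoff : ∀ k, k ≠ a → k ≠ b → w' k = w k)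
    (ha : w a = Symb.dn) (ha' : w' a = Symb.up)
    (hb : w b = Symb.up) (hb' : w' b = Symb.dn)
    (hadm : Admissible w) (hdz : DiaOnlyZero w) (hzc : ZeroConstraint w)
    (hN : IsBound w N) (hbN : b < N) :
    Admissible w' ∧ DiaOnlyZero w' ∧ ZeroConstraint w' ∧ IsBound w' N ∧
    (∀ n, w n = Symb.o ↔ w' n = Symb.o) ∧ (∀ n, w n = Symb.x ↔ w' n = Symb.x) ∧
    (w 0 = Symb.dia ↔ w' 0 = Symb.dia) ∧
    (upCount w' : ℤ) = (upCount w : ℤ) ∧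
    (∀ n, cnt w' n Symb.dn = cnt w n Symb.dn
        - (if a < n then 1 else 0) + (if b < n then 1 else 0)) := by
  have hane : a ≠ b := by omega
  have ha0 : a ≠ 0 := by
    intro h; subst h
    rcases hzc with h | h <;> rw [h] at ha <;> exact absurd ha (by simp)
  have hb0 : b ≠ 0 := by omega
  have hBd : IsBound w' N := isBound_off2 (by omega) hbN hoff hN
  have hcnt : ∀ n c, cnt w' n c = cnt w n c
      + (if a < n then ((if w' a = c then (1:ℤ) else 0) - (if w a = c then 1 else 0)) else 0)
      + (if b < n then ((if w' b = c then (1:ℤ) else 0) - (if w b = c then 1 else 0)) else 0) :=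
    fun n c => cnt_off2 hane hoff n c
  refine ⟨admissible_off2 hoff hadm, ?_, ?_, hBd, ?_, ?_, ?_, ?_, ?_⟩
  · intro n hn
    by_cases hna : n = a
    · rw [hna, ha'] at hn; exact absurd hn (by simp)
    · by_cases hnb : n = b
      · rw [hnb, hb'] at hn; exact absurd hn (by simp)
      · rw [hoff n hna hnb] at hn; exact hdz n hn
  · have : w' 0 = w 0 := hoff 0 (fun h => ha0 h.symm) (fun h => hb0 h.symm)
    rwa [ZeroConstraint, this]
  · exact match_off2 Symb.o hoff (by rw [ha]; simp) (by rw [ha']; simp)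
      (by rw [hb]; simp) (by rw [hb']; simp)
  · exact match_off2 Symb.x hoff (by rw [ha]; simp) (by rw [ha']; simp)
      (by rw [hb]; simp) (by rw [hb']; simp)
  · rw [hoff 0 (fun h => ha0 h.symm) (fun h => hb0 h.symm)]
  · rw [upCount_cast hBd, upCount_cast hN, hcnt N Symb.up, ha, ha', hb, hb']
    rw [if_pos (by omega : a < N), if_pos hbN]
    simp
  · intro n
    rw [hcnt n Symb.dn, ha, ha', hb, hb']
    by_cases h1 : a < n <;> by_cases h2 : b < n <;>
      simp [h1, h2] <;> ring

lemma shapeAD_facts {w w' : WD} {b N : ℕ} (hb0 : b ≠ 0)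
    (hoff : ∀ k, k ≠ b → w' k = w k)
    (hb : w b = Symb.up) (hb' : w' b = Symb.dn)
    (hadm : Admissible w) (hdz : DiaOnlyZero w) (hzc : ZeroConstraint w)
    (hN : IsBound w N) (hbN : b < N) :
    Admissible w' ∧ DiaOnlyZero w' ∧ ZeroConstraint w' ∧ IsBound w' N ∧
    (∀ n, w n = Symb.o ↔ w' n = Symb.o) ∧ (∀ n, w n = Symb.x ↔ w' n = Symb.x) ∧
    (w 0 = Symb.dia ↔ w' 0 = Symb.dia) ∧
    (upCount w' : ℤ) = (upCount w : ℤ) - 1 ∧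
    (∀ n, cnt w' n Symb.dn = cnt w n Symb.dn + (if b < n then 1 else 0)) := by
  have hoff2 : ∀ k, k ≠ b → k ≠ b → w' k = w k := fun k h _ => hoff k h
  have hBd : IsBound w' N := fun p hp => by rw [hoff p (by omega)]; exact hN p hp
  have hcnt : ∀ n c, cnt w' n c = cnt w n c
      + (if b < n then ((if w' b = c then (1:ℤ) else 0) - (if w b = c then 1 else 0)) else 0) :=
    fun n c => cnt_off1 hoff n c
  refine ⟨admissible_off2 hoff2 hadm, ?_, ?_, hBd, ?_, ?_, ?_, ?_, ?_⟩
  · intro n hn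
    by_cases hnb : n = b
    · rw [hnb, hb'] at hn; exact absurd hn (by simp)
    · rw [hoff n hnb] at hn; exact hdz n hn
  · have : w' 0 = w 0 := hoff 0 (fun h => hb0 h.symm)
    rwa [ZeroConstraint, this]
  · exact match_off2 Symb.o hoff2 (by rw [hb]; simp) (by rw [hb']; simp)
      (by rw [hb]; simp) (by rw [hb']; simp)
  · exact match_off2 Symb.x hoff2 (by rw [hb]; simp) (by rw [hb']; simp)
      (by rw [hb]; simp) (by rw [hb']; simp)
  · rw [hoff 0 (fun h => hb0 h.symm)]
  · rw [upCount_cast hBd, upCount_cast hN, hcnt N Symb.up, hb, hb']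
    rw [if_pos hbN]
    simp
    ring
  · intro n
    rw [hcnt n Symb.dn, hb, hb']
    by_cases h2 : b < n <;> simp [h2]

lemma shapeD_facts {w w' : WD} {a b N : ℕ} (hab : a < b)
    (hoff : ∀ k, k ≠ a → k ≠ b → w' k = w k)
    (ha : w a = Symb.up) (ha' : w' a = Symb.dn)
    (hb : w b = Symb.up) (hb' : w' b = Symb.dn)
    (hadm : Admissible w) (hdz : DiaOnlyZero w) (hzc : ZeroConstraint w)
    (hN : IsBound w N) (hbN : b < N) :
    Admissible w' ∧ DiaOnlyZero w' ∧ ZeroConstraint w' ∧ IsBound w' N ∧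
    (∀ n, w n = Symb.o ↔ w' n = Symb.o) ∧ (∀ n, w n = Symb.x ↔ w' n = Symb.x) ∧
    (w 0 = Symb.dia ↔ w' 0 = Symb.dia) ∧
    (upCount w' : ℤ) = (upCount w : ℤ) - 2 ∧
    (∀ n, cnt w' n Symb.dn = cnt w n Symb.dn
        + (if a < n then 1 else 0) + (if b < n then 1 else 0)) := by
  have hane : a ≠ b := by omega
  have ha0 : a ≠ 0 := by
    intro h; subst h
    rcases hzc with h | h <;> rw [h] at ha <;> exact absurd ha (by simp)
  have hb0 : b ≠ 0 := by omega
  have hBd : IsBound w' N := isBound_off2 (by omega) hbN hoff hN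
  have hcnt : ∀ n c, cnt w' n c = cnt w n c
      + (if a < n then ((if w' a = c then (1:ℤ) else 0) - (if w a = c then 1 else 0)) else 0)
      + (if b < n then ((if w' b = c then (1:ℤ) else 0) - (if w b = c then 1 else 0)) else 0) :=
    fun n c => cnt_off2 hane hoff n c
  refine ⟨admissible_off2 hoff hadm, ?_, ?_, hBd, ?_, ?_, ?_, ?_, ?_⟩
  · intro n hn
    by_cases hna : n = a
    · rw [hna, ha'] at hn; exact absurd hn (by simp)
    · by_cases hnb : n = b
      · rw [hnb, hb'] at hn; exact absurd hn (by simp)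
      · rw [hoff n hna hnb] at hn; exact hdz n hn
  · have : w' 0 = w 0 := hoff 0 (fun h => ha0 h.symm) (fun h => hb0 h.symm)
    rwa [ZeroConstraint, this]
  · exact match_off2 Symb.o hoff (by rw [ha]; simp) (by rw [ha']; simp)
      (by rw [hb]; simp) (by rw [hb']; simp)
  · exact match_off2 Symb.x hoff (by rw [ha]; simp) (by rw [ha']; simp)
      (by rw [hb]; simp) (by rw [hb']; simp)
  · rw [hoff 0 (fun h => ha0 h.symm) (fun h => hb0 h.symm)]
  · rw [upCount_cast hBd, upCount_cast hN, hcnt N Symb.up, ha, ha', hb, hb']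
    rw [if_pos (by omega : a < N), if_pos hbN]
    simp
    ring
  · intro n
    rw [hcnt n Symb.dn, ha, ha', hb, hb']
    by_cases h1 : a < n <;> by_cases h2 : b < n <;>
      simp [h1, h2] <;> ring


lemma move_forward {w w' : WD} (hm : BruhatMove w w')
    (hadm : Admissible w) (hdz : DiaOnlyZero w) (hzc : ZeroConstraint w) :
    Admissible w' ∧ DiaOnlyZero w' ∧ ZeroConstraint w' ∧
    (∀ n, w n = Symb.o ↔ w' n = Symb.o) ∧ (∀ n, w n = Symb.x ↔ w' n = Symb.x) ∧
    (upCount w' : ℤ) ≤ (upCount w : ℤ) ∧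
    (∀ n, (upCount w' : ℤ) + cnt w' n Symb.dn ≤ (upCount w : ℤ) + cnt w n Symb.dn) := by
  obtain ⟨N, hN0, hN⟩ := exists_bound hadm hdz
  rcases hm with ⟨i, j, ⟨hij, hneigh⟩, hoff, hwj, hw'j, hcase⟩ | hD
  · have hjN : j < N := by
      by_contra hc
      rw [hN j (by omega)] at hwj
      exact absurd hwj (by simp)
    rcases hcase with ⟨hwi, hw'i⟩ | ⟨hwi, hw'i⟩
    · obtain ⟨f1, f2, f3, f4, f5, f6, f7, f8, f9⟩ :=
        shapeA_facts hij hoff hwi hw'i hwj hw'j hadm hdz hzc hN hjN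
      refine ⟨f1, f2, f3, f5, f6, by omega, fun n => ?_⟩
      have := f9 n
      by_cases h1 : i < n <;> by_cases h2 : j < n <;>
        · simp only [h1, h2, if_true, if_false] at this <;> omega
    · have hoff1 : ∀ k, k ≠ j → w' k = w k := by
        intro k hk
        by_cases hki : k = i
        · rw [hki, hw'i, hwi]
        · exact hoff k hki hk
      have hj0 : j ≠ 0 := by omega
      obtain ⟨f1, f2, f3, f4, f5, f6, f7, f8, f9⟩ :=
        shapeAD_facts hj0 hoff1 hwj hw'j hadm hdz hzc hN hjN
      refine ⟨f1, f2, f3, f5, f6, by omega, fun n => ?_⟩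
      have := f9 n
      by_cases h2 : j < n <;>
        · simp only [h2, if_true, if_false] at this <;> omega
  · obtain ⟨i, j, ⟨hij, hneigh⟩, hpre, hoff, hwi, hwj, hw'i, hw'j⟩ := hD
    have hjN : j < N := by
      by_contra hc
      rw [hN j (by omega)] at hwj
      exact absurd hwj (by simp)
    obtain ⟨f1, f2, f3, f4, f5, f6, f7, f8, f9⟩ :=
      shapeD_facts hij hoff hwi hw'i hwj hw'j hadm hdz hzc hN hjN
    refine ⟨f1, f2, f3, f5, f6, by omega, fun n => ?_⟩
    have := f9 n
    by_cases h1 : i < n <;> by_cases h2 : j < n <;>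
      · simp only [h1, h2, if_true, if_false] at this <;> omega

lemma lstat_self (mu : WD) (i : ℕ) : lstat mu mu i = 0 := by
  cases i with
  | zero => rw [lstat_zero]; ring
  | succ p =>
    rw [lstat]
    split
    · rfl
    · ring

lemma forward (mu : WD) : ∀ lam, BruhatLE lam mu →
    Admissible lam → DiaOnlyZero lam → ZeroConstraint lam → ∀ i, 0 ≤ lstat lam mu i := by
  intro lam h
  induction h using Relation.ReflTransGen.head_induction_on with
  | refl => intro _ _ _ i; rw [lstat_self]
  | @head a c hmv hrest ih =>
    intro hadm hdz hzc
    obtain ⟨f1, f2, f3, f4, f5, f6, f7⟩ := move_forward hmv hadm hdz hzc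
    have Hc := ih f1 f2 f3
    intro i
    cases i with
    | zero =>
      have := Hc 0
      rw [lstat_zero] at this ⊢
      omega
    | succ p =>
      by_cases hox : a (p+1) = Symb.o ∨ a (p+1) = Symb.x
      · rw [lstat_eq_zero (Nat.succ_pos p) hox]
      · have hox' : ¬(c (p+1) = Symb.o ∨ c (p+1) = Symb.x) := by
          intro hc
          rcases hc with hc | hc
          · exact hox (Or.inl ((f4 (p+1)).mpr hc))
          · exact hox (Or.inr ((f5 (p+1)).mpr hc))
        have h1 := Hc (p+1)
        rw [lstat_eq_tf (Nat.succ_pos p) hox'] at h1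
        rw [lstat_eq_tf (Nat.succ_pos p) hox]
        have h2 := f7 (p.succ + 1)
        rw [tf] at h1 ⊢
        omega


lemma concludeA {lam mu : WD} {N a b : ℕ}
    (hla : Admissible lam) (hld : DiaOnlyZero lam) (hlz : ZeroConstraint lam)
    (hmz : ZeroConstraint mu) (hsb : SameBlock lam mu)
    (hNl : IsBound lam N) (hN0 : 0 < N)
    (H : ∀ i, 0 ≤ lstat lam mu i)
    (hneigh : Neigh lam a b) (hwa : lam a = Symb.dn) (hwb : lam b = Symb.up)
    (htfa : 1 ≤ tf lam mu a) :
    ∃ lam', BruhatMove lam lam' ∧ Admissible lam' ∧ DiaOnlyZero lam' ∧ ZeroConstraint lam' ∧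
      IsBound lam' N ∧ SameBlock lam' mu ∧ (∀ i, 0 ≤ lstat lam' mu i) ∧
      (∑ p ∈ Finset.range N, (lstat lam' mu p).toNat)
        < ∑ p ∈ Finset.range N, (lstat lam mu p).toNat := by
  classical
  obtain ⟨hab, hbet⟩ := hneigh
  have hbN : b < N := by
    by_contra hc
    rw [hNl b (by omega)] at hwb; exact absurd hwb (by simp)
  have hane : a ≠ b := by omega
  set lam' : WD := Function.update (Function.update lam a Symb.up) b Symb.dn with hdef
  have hoff : ∀ k, k ≠ a → k ≠ b → lam' k = lam k := by
    intro k h1 h2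
    rw [hdef, Function.update_of_ne h2, Function.update_of_ne h1]
  have h'a : lam' a = Symb.up := by
    rw [hdef, Function.update_of_ne hane, Function.update_self]
  have h'b : lam' b = Symb.dn := by rw [hdef, Function.update_self]
  obtain ⟨f1, f2, f3, f4, f5, f6, f7, f8, f9⟩ :=
    shapeA_facts hab hoff hwa h'a hwb h'b hla hld hlz hNl hbN
  have ha0 : a ≠ 0 := by
    intro h; subst h; rcases hlz with h | h <;> rw [h] at hwa <;> exact absurd hwa (by simp)
  have hb0 : b ≠ 0 := by omega
  have h0 : lam' 0 = lam 0 := hoff 0 (fun h => ha0 h.symm) (fun h => hb0 h.symm)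
  have htf : ∀ p, tf lam' mu p
      = tf lam mu p - (if a ≤ p then 1 else 0) + (if b ≤ p then 1 else 0) := by
    intro p
    rw [tf, tf, f9 (p+1), f8]
    split_ifs <;> omega
  have hoxiff : ∀ p, (lam p = Symb.o ∨ lam p = Symb.x) ↔ (lam' p = Symb.o ∨ lam' p = Symb.x) :=
    fun p => or_congr (f5 p) (f6 p)
  have hk0' : lstat lam' mu 0 = lstat lam mu 0 := by
    rw [lstat_zero, lstat_zero]; omega
  have key : ∀ p, 0 ≤ lstat lam' mu p ∧ lstat lam' mu p ≤ lstat lam mu p := by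
    intro p
    cases p with
    | zero => rw [hk0']; exact ⟨H 0, le_refl _⟩
    | succ q =>
      by_cases hox : lam' (q+1) = Symb.o ∨ lam' (q+1) = Symb.x
      · rw [lstat_eq_zero (show 0 < q+1 by omega) hox]
        exact ⟨le_refl _, H (q+1)⟩
      · have hoxl : ¬(lam (q+1) = Symb.o ∨ lam (q+1) = Symb.x) := fun h => hox ((hoxiff _).mp h)
        rw [lstat_eq_tf (show 0 < q+1 by omega) hox, lstat_eq_tf (show 0 < q+1 by omega) hoxl, htf (q+1)]
        have hnn := tf_nonneg hlz hmz hsb.1 hsb.2.1 H (q+1)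
        constructor
        · rcases Nat.lt_or_ge (q+1) a with h1 | h1
          · have c1 : ¬ a ≤ q+1 := by omega
            have c2 : ¬ b ≤ q+1 := by omega
            rw [if_neg c1, if_neg c2]; omega
          · rcases Nat.lt_or_ge (q+1) b with h2 | h2
            · rcases Nat.lt_or_ge a (q+1) with h3 | h3
              · exact absurd (hbet (q+1) h3 h2) hoxl
              · have he : q+1 = a := by omega
                have c1 : a ≤ q+1 := by omega
                have c2 : ¬ b ≤ q+1 := by omega
                rw [if_pos c1, if_neg c2, he]
                omega
            · have c1 : a ≤ q+1 := by omega
              have c2 : b ≤ q+1 := by omega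
              rw [if_pos c1, if_pos c2]; omega
        · split_ifs <;> omega
  refine ⟨lam', Or.inl ⟨a, b, ⟨hab, hbet⟩, hoff, hwb, h'b, Or.inl ⟨hwa, h'a⟩⟩,
    f1, f2, f3, f4, ?_, fun i => (key i).1, ?_⟩
  · refine ⟨fun n => (f5 n).symm.trans (hsb.1 n), fun n => (f6 n).symm.trans (hsb.2.1 n),
      f7.symm.trans hsb.2.2.1, ?_⟩
    have hue : upCount lam' = upCount lam := by omega
    rcases hsb.2.2.2 with hp | ⟨hd1, hd2⟩
    · left; rw [hue]; exact hp
    · right; rw [h0]; exact ⟨hd1, hd2⟩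
  · refine Finset.sum_lt_sum (fun p _ => ?_) ⟨a, Finset.mem_range.mpr (by omega), ?_⟩
    · have h1 := key p
      have h2 := H p
      omega
    · have hoxa : ¬(lam a = Symb.o ∨ lam a = Symb.x) := by rw [hwa]; simp
      have hoxa' : ¬(lam' a = Symb.o ∨ lam' a = Symb.x) := by rw [h'a]; simp
      have e1 : lstat lam mu a = tf lam mu a := lstat_eq_tf (by omega) hoxa
      have e2 : lstat lam' mu a = tf lam' mu a := lstat_eq_tf (by omega) hoxa'
      have e3 := htf a
      have c1 : a ≤ a := le_refl a
      have c2 : ¬ b ≤ a := by omega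
      rw [if_pos c1, if_neg c2] at e3
      rw [e1, e2, e3]
      omega

lemma concludeAD {lam mu : WD} {N b : ℕ}
    (hla : Admissible lam) (hld : DiaOnlyZero lam) (hlz : ZeroConstraint lam)
    (hmz : ZeroConstraint mu) (hsb : SameBlock lam mu)
    (hNl : IsBound lam N) (hN0 : 0 < N)
    (H : ∀ i, 0 ≤ lstat lam mu i)
    (hneigh : Neigh lam 0 b) (hdia : lam 0 = Symb.dia) (hwb : lam b = Symb.up)
    (hk0 : 1 ≤ lstat lam mu 0) :
    ∃ lam', BruhatMove lam lam' ∧ Admissible lam' ∧ DiaOnlyZero lam' ∧ ZeroConstraint lam' ∧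
      IsBound lam' N ∧ SameBlock lam' mu ∧ (∀ i, 0 ≤ lstat lam' mu i) ∧
      (∑ p ∈ Finset.range N, (lstat lam' mu p).toNat)
        < ∑ p ∈ Finset.range N, (lstat lam mu p).toNat := by
  classical
  obtain ⟨hab, hbet⟩ := hneigh
  have hb0 : b ≠ 0 := by omega
  have hbN : b < N := by
    by_contra hc
    rw [hNl b (by omega)] at hwb; exact absurd hwb (by simp)
  set lam' : WD := Function.update lam b Symb.dn with hdef
  have hoff1 : ∀ k, k ≠ b → lam' k = lam k := by
    intro k h1
    rw [hdef, Function.update_of_ne h1]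
  have hoff : ∀ k, k ≠ 0 → k ≠ b → lam' k = lam k := fun k _ h2 => hoff1 k h2
  have h'b : lam' b = Symb.dn := by rw [hdef, Function.update_self]
  have h0 : lam' 0 = lam 0 := hoff1 0 (fun h => hb0 h.symm)
  obtain ⟨f1, f2, f3, f4, f5, f6, f7, f8, f9⟩ :=
    shapeAD_facts hb0 hoff1 hwb h'b hla hld hlz hNl hbN
  have htf : ∀ p, tf lam' mu p = tf lam mu p - 1 + (if b ≤ p then 1 else 0) := by
    intro p
    rw [tf, tf, f9 (p+1), f8]
    split_ifs <;> omega
  have hoxiff : ∀ p, (lam p = Symb.o ∨ lam p = Symb.x) ↔ (lam' p = Symb.o ∨ lam' p = Symb.x) :=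
    fun p => or_congr (f5 p) (f6 p)
  have hk0' : lstat lam' mu 0 = lstat lam mu 0 - 1 := by
    rw [lstat_zero, lstat_zero]; omega
  have key : ∀ p, 0 ≤ lstat lam' mu p ∧ lstat lam' mu p ≤ lstat lam mu p := by
    intro p
    cases p with
    | zero => rw [hk0']; constructor <;> omega
    | succ q =>
      by_cases hox : lam' (q+1) = Symb.o ∨ lam' (q+1) = Symb.x
      · rw [lstat_eq_zero (show 0 < q+1 by omega) hox]
        exact ⟨le_refl _, H (q+1)⟩
      · have hoxl : ¬(lam (q+1) = Symb.o ∨ lam (q+1) = Symb.x) := fun h => hox ((hoxiff _).mp h)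
        rw [lstat_eq_tf (show 0 < q+1 by omega) hox, lstat_eq_tf (show 0 < q+1 by omega) hoxl, htf (q+1)]
        have hnn := tf_nonneg hlz hmz hsb.1 hsb.2.1 H (q+1)
        constructor
        · rcases Nat.lt_or_ge (q+1) b with h2 | h2
          · exact absurd (hbet (q+1) (show 0 < q+1 by omega) h2) hoxl
          · have c2 : b ≤ q+1 := by omega
            rw [if_pos c2]; omega
        · split_ifs <;> omega
  refine ⟨lam', Or.inl ⟨0, b, ⟨hab, hbet⟩, hoff, hwb, h'b, Or.inr ⟨hdia, by rw [h0, hdia]⟩⟩,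
    f1, f2, f3, f4, ?_, fun i => (key i).1, ?_⟩
  · refine ⟨fun n => (f5 n).symm.trans (hsb.1 n), fun n => (f6 n).symm.trans (hsb.2.1 n),
      f7.symm.trans hsb.2.2.1, ?_⟩
    right
    refine ⟨by rw [h0, hdia], ?_⟩
    exact hsb.2.2.1.mp hdia
  · refine Finset.sum_lt_sum (fun p _ => ?_) ⟨0, Finset.mem_range.mpr (by omega), ?_⟩
    · have h1 := key p
      have h2 := H p
      omega
    · rw [hk0']
      have := H 0
      omega

lemma concludeD {lam mu : WD} {N a b : ℕ}
    (hla : Admissible lam) (hld : DiaOnlyZero lam) (hlz : ZeroConstraint lam)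
    (hmz : ZeroConstraint mu) (hsb : SameBlock lam mu)
    (hNl : IsBound lam N) (hN0 : 0 < N)
    (H : ∀ i, 0 ≤ lstat lam mu i)
    (hneigh : Neigh lam a b) (hpre : ∀ k, k < a → lam k = Symb.o ∨ lam k = Symb.x)
    (hwa : lam a = Symb.up) (hwb : lam b = Symb.up)
    (htfa : 1 ≤ tf lam mu a) (hk0 : 2 ≤ lstat lam mu 0) :
    ∃ lam', BruhatMove lam lam' ∧ Admissible lam' ∧ DiaOnlyZero lam' ∧ ZeroConstraint lam' ∧
      IsBound lam' N ∧ SameBlock lam' mu ∧ (∀ i, 0 ≤ lstat lam' mu i) ∧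
      (∑ p ∈ Finset.range N, (lstat lam' mu p).toNat)
        < ∑ p ∈ Finset.range N, (lstat lam mu p).toNat := by
  classical
  obtain ⟨hab, hbet⟩ := hneigh
  have hbN : b < N := by
    by_contra hc
    rw [hNl b (by omega)] at hwb; exact absurd hwb (by simp)
  have hane : a ≠ b := by omega
  set lam' : WD := Function.update (Function.update lam a Symb.dn) b Symb.dn with hdef
  have hoff : ∀ k, k ≠ a → k ≠ b → lam' k = lam k := by
    intro k h1 h2
    rw [hdef, Function.update_of_ne h2, Function.update_of_ne h1]
  have h'a : lam' a = Symb.dn := by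
    rw [hdef, Function.update_of_ne hane, Function.update_self]
  have h'b : lam' b = Symb.dn := by rw [hdef, Function.update_self]
  obtain ⟨f1, f2, f3, f4, f5, f6, f7, f8, f9⟩ :=
    shapeD_facts hab hoff hwa h'a hwb h'b hla hld hlz hNl hbN
  have ha0 : a ≠ 0 := by
    intro h; subst h; rcases hlz with h | h <;> rw [h] at hwa <;> exact absurd hwa (by simp)
  have hb0 : b ≠ 0 := by omega
  have h0 : lam' 0 = lam 0 := hoff 0 (fun h => ha0 h.symm) (fun h => hb0 h.symm)
  have htf : ∀ p, tf lam' mu p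
      = tf lam mu p - 2 + (if a ≤ p then 1 else 0) + (if b ≤ p then 1 else 0) := by
    intro p
    rw [tf, tf, f9 (p+1), f8]
    split_ifs <;> omega
  have hoxiff : ∀ p, (lam p = Symb.o ∨ lam p = Symb.x) ↔ (lam' p = Symb.o ∨ lam' p = Symb.x) :=
    fun p => or_congr (f5 p) (f6 p)
  have hk0' : lstat lam' mu 0 = lstat lam mu 0 - 2 := by
    rw [lstat_zero, lstat_zero]; omega
  have key : ∀ p, 0 ≤ lstat lam' mu p ∧ lstat lam' mu p ≤ lstat lam mu p := by
    intro p
    cases p with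
    | zero => rw [hk0']; constructor <;> omega
    | succ q =>
      by_cases hox : lam' (q+1) = Symb.o ∨ lam' (q+1) = Symb.x
      · rw [lstat_eq_zero (show 0 < q+1 by omega) hox]
        exact ⟨le_refl _, H (q+1)⟩
      · have hoxl : ¬(lam (q+1) = Symb.o ∨ lam (q+1) = Symb.x) := fun h => hox ((hoxiff _).mp h)
        rw [lstat_eq_tf (show 0 < q+1 by omega) hox, lstat_eq_tf (show 0 < q+1 by omega) hoxl, htf (q+1)]
        have hnn := tf_nonneg hlz hmz hsb.1 hsb.2.1 H (q+1)
        constructor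
        · rcases Nat.lt_or_ge (q+1) a with h1 | h1
          · exact absurd (hpre (q+1) h1) hoxl
          · rcases Nat.lt_or_ge (q+1) b with h2 | h2
            · rcases Nat.lt_or_ge a (q+1) with h3 | h3
              · exact absurd (hbet (q+1) h3 h2) hoxl
              · have he : q+1 = a := by omega
                have c1 : a ≤ q+1 := by omega
                have c2 : ¬ b ≤ q+1 := by omega
                rw [if_pos c1, if_neg c2, he]
                omega
            · have c1 : a ≤ q+1 := by omega
              have c2 : b ≤ q+1 := by omega
              rw [if_pos c1, if_pos c2]; omega
        · split_ifs <;> omega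
  refine ⟨lam', Or.inr ⟨a, b, ⟨hab, hbet⟩, hpre, hoff, hwa, hwb, h'a, h'b⟩,
    f1, f2, f3, f4, ?_, fun i => (key i).1, ?_⟩
  · refine ⟨fun n => (f5 n).symm.trans (hsb.1 n), fun n => (f6 n).symm.trans (hsb.2.1 n),
      f7.symm.trans hsb.2.2.1, ?_⟩
    have hue : upCount lam = upCount lam' + 2 := by omega
    rcases hsb.2.2.2 with hp | ⟨hd1, hd2⟩
    · left; omega
    · right; rw [h0]; exact ⟨hd1, hd2⟩
  · refine Finset.sum_lt_sum (fun p _ => ?_) ⟨0, Finset.mem_range.mpr (by omega), ?_⟩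
    · have h1 := key p
      have h2 := H p
      omega
    · rw [hk0']
      omega


lemma step_exists {lam mu : WD} {N : ℕ}
    (hla : Admissible lam) (hld : DiaOnlyZero lam) (hlz : ZeroConstraint lam)
    (hma : Admissible mu) (hmd : DiaOnlyZero mu) (hmz : ZeroConstraint mu)
    (hsb : SameBlock lam mu)
    (hNl : IsBound lam N) (hNm : IsBound mu N) (hN0 : 0 < N)
    (H : ∀ i, 0 ≤ lstat lam mu i) (hne : lam ≠ mu) :
    ∃ lam', BruhatMove lam lam' ∧ Admissible lam' ∧ DiaOnlyZero lam' ∧ ZeroConstraint lam' ∧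
      IsBound lam' N ∧ SameBlock lam' mu ∧ (∀ i, 0 ≤ lstat lam' mu i) ∧
      (∑ p ∈ Finset.range N, (lstat lam' mu p).toNat)
        < ∑ p ∈ Finset.range N, (lstat lam mu p).toNat := by
  classical
  have hoxo := hsb.1
  have hoxx := hsb.2.1
  have hdia0 := hsb.2.2.1
  have hsb' : SameBlock lam mu := hsb
  have tnn : ∀ p, 0 ≤ tf lam mu p := tf_nonneg hlz hmz hoxo hoxx H
  have tlarge : ∀ p, N ≤ p → tf lam mu p = 0 := fun p hp =>
    tf_large hNl hNm hld hmd hoxo hoxx hdia0 hp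
  have hdiff : ∃ p, lam p ≠ mu p := by
    by_contra hc
    push_neg at hc
    exact hne (funext hc)
  set ps := Nat.find hdiff with hpsdef
  have hpsne : lam ps ≠ mu ps := Nat.find_spec hdiff
  have hmin : ∀ q, q < ps → lam q = mu q := by
    intro q hq
    have := Nat.find_min hdiff hq
    simpa using this
  have hp0 : 0 < ps := by
    rcases Nat.eq_zero_or_pos ps with h | h
    · exfalso
      rcases hlz with hz | hz
      · exact hpsne (by rw [h, hz, ((hoxo 0).mp hz).symm])
      · exact hpsne (by rw [h, hz, (hdia0.mp hz).symm])
    · exact h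
  have tf_before : ∀ q, q < ps → tf lam mu q = lstat lam mu 0 := by
    intro q hq
    rw [tf, lstat_zero, cnt_congr Symb.dn (fun j hj => hmin j (by omega))]
    ring
  -- symbols at ps
  have hchar : (lam ps = Symb.dn ∧ mu ps = Symb.up) ∨ (lam ps = Symb.up ∧ mu ps = Symb.dn) := by
    have hlam : lam ps = Symb.dn ∨ lam ps = Symb.up := by
      cases hl : lam ps
      · exact absurd (by rw [hl, ((hoxx ps).mp hl).symm]) hpsne
      · exact absurd (by rw [hl, ((hoxo ps).mp hl).symm]) hpsne
      · exact Or.inl rfl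
      · exact Or.inr rfl
      · exact absurd (hld ps hl) (by omega)
    have hmu : mu ps = Symb.dn ∨ mu ps = Symb.up := by
      cases hm : mu ps
      · exact absurd (by rw [hm, ((hoxx ps).mpr hm)]) hpsne
      · exact absurd (by rw [hm, ((hoxo ps).mpr hm)]) hpsne
      · exact Or.inl rfl
      · exact Or.inr rfl
      · exact absurd (hmd ps hm) (by omega)
    rcases hlam with h1 | h1 <;> rcases hmu with h2 | h2
    · exact absurd (h1.trans h2.symm) hpsne
    · exact Or.inl ⟨h1, h2⟩
    · exact Or.inr ⟨h1, h2⟩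
    · exact absurd (h1.trans h2.symm) hpsne
  have hps1 : ps - 1 + 1 = ps := by omega
  have htstep := tf_succ lam mu (ps - 1)
  rw [hps1, tf_before (ps-1) (by omega)] at htstep
  rcases hchar with ⟨hlps, hmps⟩ | ⟨hlps, hmps⟩
  · -- CASE 1 : lam ps = dn, mu ps = up
    have htstar : tf lam mu ps = lstat lam mu 0 + 1 := by
      rw [htstep, if_pos hlps, if_neg (by rw [hmps]; simp)]
      ring
    have hpsN : ps < N := by
      by_contra hc
      have := tlarge ps (by omega)
      have := H 0
      omega
    have hupex : ∃ q, ps < q ∧ q ≤ N ∧ lam q = Symb.up := by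
      apply exists_up_of_tf_lt hoxo hoxx hld (le_of_lt hpsN)
      have := tlarge N (le_refl N)
      have := H 0
      omega
    have hbex : ∃ q, ps < q ∧ lam q = Symb.up := by
      obtain ⟨q, h1, _, h3⟩ := hupex; exact ⟨q, h1, h3⟩
    set b0 := Nat.find hbex with hb0def
    obtain ⟨hb1, hb2⟩ : ps < b0 ∧ lam b0 = Symb.up := Nat.find_spec hbex
    have hbmin : ∀ q, q < b0 → ¬(ps < q ∧ lam q = Symb.up) := fun q hq => Nat.find_min hbex hq
    set a0 := Nat.findGreatest (fun i => ¬(lam i = Symb.o ∨ lam i = Symb.x)) (b0 - 1) with ha0def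
    have ha1 : ps ≤ a0 := Nat.le_findGreatest (P := fun i => ¬(lam i = Symb.o ∨ lam i = Symb.x)) (by omega) (by show ¬(lam ps = Symb.o ∨ lam ps = Symb.x); rw [hlps]; simp)
    have ha2 : ¬(lam a0 = Symb.o ∨ lam a0 = Symb.x) :=
      Nat.findGreatest_spec (P := fun i => ¬(lam i = Symb.o ∨ lam i = Symb.x)) (m := ps)
        (by omega) (by show ¬(lam ps = Symb.o ∨ lam ps = Symb.x); rw [hlps]; simp)
    have ha4 : a0 < b0 := by
      have := Nat.findGreatest_le (P := fun i => ¬(lam i = Symb.o ∨ lam i = Symb.x)) (b0 - 1)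
      omega
    have ha3 : ∀ q, a0 < q → q < b0 → lam q = Symb.o ∨ lam q = Symb.x := by
      intro q h1 h2
      have := Nat.findGreatest_is_greatest (P := fun i => ¬(lam i = Symb.o ∨ lam i = Symb.x))
        (n := b0 - 1) (k := q) (by omega) (by omega)
      exact not_not.mp this
    have hlama0 : lam a0 = Symb.dn := by
      cases hl : lam a0
      · exact absurd (Or.inr hl) ha2
      · exact absurd (Or.inl hl) ha2
      · rfl
      · rcases Nat.lt_or_ge ps a0 with h | h
        · exact absurd ⟨h, hl⟩ (hbmin a0 ha4)
        · have : a0 = ps := by omega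
          rw [this, hlps] at hl; exact absurd hl (by simp)
      · exact absurd (hld a0 hl) (by omega)
    have htfa : 1 ≤ tf lam mu a0 := by
      have hmono : tf lam mu ps ≤ tf lam mu a0 := by
        apply tf_mono hoxo hoxx hld a0 ha1
        intro q h1 h2 hq
        exact hbmin q (by omega) ⟨h1, hq⟩
      have := H 0
      omega
    exact concludeA hla hld hlz hmz hsb' hNl hN0 H
      ⟨ha4, fun k h1 h2 => ha3 k h1 h2⟩ hlama0 hb2 htfa
  · -- CASE 2 : lam ps = up, mu ps = dn
    have htstar : tf lam mu ps = lstat lam mu 0 - 1 := by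
      rw [htstep, if_neg (show ¬(lam ps = Symb.dn) by rw [hlps]; simp), if_pos hmps]
      ring
    have hk1 : 1 ≤ lstat lam mu 0 := by
      have := tnn ps
      omega
    by_cases hex : ∃ i, i < ps ∧ ¬(lam i = Symb.o ∨ lam i = Symb.x ∨ lam i = Symb.up)
    · -- SUBCASE 2a
      obtain ⟨i0, hi1, hi2⟩ := hex
      set a0 := Nat.findGreatest
        (fun i => ¬(lam i = Symb.o ∨ lam i = Symb.x ∨ lam i = Symb.up)) (ps - 1) with ha0def
      have ha1 : ¬(lam a0 = Symb.o ∨ lam a0 = Symb.x ∨ lam a0 = Symb.up) :=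
        Nat.findGreatest_spec
          (P := fun i => ¬(lam i = Symb.o ∨ lam i = Symb.x ∨ lam i = Symb.up)) (m := i0)
          (by omega) (by show ¬(lam i0 = Symb.o ∨ lam i0 = Symb.x ∨ lam i0 = Symb.up); exact hi2)
      have ha2 : a0 < ps := by
        have := Nat.findGreatest_le
          (P := fun i => ¬(lam i = Symb.o ∨ lam i = Symb.x ∨ lam i = Symb.up)) (ps - 1)
        omega
      have ha3 : ∀ q, a0 < q → q < ps →
          lam q = Symb.o ∨ lam q = Symb.x ∨ lam q = Symb.up := by
        intro q h1 h2
        have := Nat.findGreatest_is_greatest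
          (P := fun i => ¬(lam i = Symb.o ∨ lam i = Symb.x ∨ lam i = Symb.up))
          (n := ps - 1) (k := q) (by omega) (by omega)
        exact not_not.mp this
      have hbex : ∃ q, a0 < q ∧ lam q = Symb.up := ⟨ps, ha2, hlps⟩
      set b0 := Nat.find hbex with hb0def
      obtain ⟨hb1, hb2⟩ : a0 < b0 ∧ lam b0 = Symb.up := Nat.find_spec hbex
      have hbmin : ∀ q, q < b0 → ¬(a0 < q ∧ lam q = Symb.up) := fun q hq => Nat.find_min hbex hq
      have hbps : b0 ≤ ps := Nat.find_min' hbex ⟨ha2, hlps⟩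
      have hneigh : Neigh lam a0 b0 := by
        refine ⟨hb1, fun k h1 h2 => ?_⟩
        rcases ha3 k h1 (by omega) with h | h | h
        · exact Or.inl h
        · exact Or.inr h
        · exact absurd ⟨h1, h⟩ (hbmin k h2)
      cases hl : lam a0
      · exact absurd (Or.inr (Or.inl hl)) ha1
      · exact absurd (Or.inl hl) ha1
      · -- lam a0 = dn : type A move
        have htfa : 1 ≤ tf lam mu a0 := by
          rw [tf_before a0 ha2]
          omega
        exact concludeA hla hld hlz hmz hsb' hNl hN0 H hneigh hl hb2 htfa
      · exact absurd (Or.inr (Or.inr hl)) ha1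
      · -- lam a0 = dia : a0 = 0, type A diamond move
        have ha00 : a0 = 0 := hld a0 hl
        rw [ha00] at hneigh
        rw [ha00] at hl
        exact concludeAD hla hld hlz hmz hsb' hNl hN0 H hneigh hl hb2 hk1
    · -- SUBCASE 2b
      push_neg at hex
      have hall : ∀ i, i < ps → (lam i = Symb.o ∨ lam i = Symb.x ∨ lam i = Symb.up) := hex
      have hzo : lam 0 = Symb.o := by
        rcases hlz with h | h
        · exact h
        · rcases hall 0 hp0 with h1 | h1 | h1 <;> rw [h] at h1 <;> exact absurd h1 (by simp)
      have hk2 : 2 ≤ lstat lam mu 0 := by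
        rcases hsb'.2.2.2 with hpar | ⟨hd1, _⟩
        · rw [lstat_zero] at hk1 ⊢
          omega
        · rw [hzo] at hd1; exact absurd hd1 (by simp)
      have haex : ∃ q, lam q = Symb.up := ⟨ps, hlps⟩
      set a0 := Nat.find haex with ha0def
      have ha1 : lam a0 = Symb.up := Nat.find_spec haex
      have hamin : ∀ q, q < a0 → lam q ≠ Symb.up := fun q hq => Nat.find_min haex hq
      have haps : a0 ≤ ps := Nat.find_min' haex hlps
      have hpre : ∀ k, k < a0 → lam k = Symb.o ∨ lam k = Symb.x := by
        intro k hk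
        rcases hall k (by omega) with h | h | h
        · exact Or.inl h
        · exact Or.inr h
        · exact absurd h (hamin k hk)
      have ha00 : a0 ≠ 0 := by
        intro h; rw [h, hzo] at ha1; exact absurd ha1 (by simp)
      have htfa0 : 1 ≤ tf lam mu a0 := by
        rcases Nat.lt_or_ge a0 ps with h | h
        · rw [tf_before a0 h]; omega
        · have : a0 = ps := by omega
          rw [this]; omega
      have hbex : ∃ q, a0 < q ∧ lam q = Symb.up := by
        rcases Nat.lt_or_ge a0 ps with h | h
        · exact ⟨ps, h, hlps⟩
        · have haeq : a0 = ps := by omega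
          have hpsN : ps < N := by
            by_contra hc
            have := tlarge ps (by omega)
            omega
          obtain ⟨q, h1, _, h3⟩ := exists_up_of_tf_lt hoxo hoxx hld (le_of_lt hpsN)
            (by have := tlarge N (le_refl N); omega)
          exact ⟨q, by omega, h3⟩
      set b0 := Nat.find hbex with hb0def
      obtain ⟨hb1, hb2⟩ : a0 < b0 ∧ lam b0 = Symb.up := Nat.find_spec hbex
      have hbmin : ∀ q, q < b0 → ¬(a0 < q ∧ lam q = Symb.up) := fun q hq => Nat.find_min hbex hq
      set i1 := Nat.findGreatest (fun i => ¬(lam i = Symb.o ∨ lam i = Symb.x)) (b0 - 1)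
        with hi1def
      have hi1a : a0 ≤ i1 := Nat.le_findGreatest (P := fun i => ¬(lam i = Symb.o ∨ lam i = Symb.x)) (by omega) (by show ¬(lam a0 = Symb.o ∨ lam a0 = Symb.x); rw [ha1]; simp)
      have hi1spec : ¬(lam i1 = Symb.o ∨ lam i1 = Symb.x) :=
        Nat.findGreatest_spec (P := fun i => ¬(lam i = Symb.o ∨ lam i = Symb.x)) (m := a0)
          (by omega) (by show ¬(lam a0 = Symb.o ∨ lam a0 = Symb.x); rw [ha1]; simp)
      have hi1b : i1 < b0 := by
        have := Nat.findGreatest_le (P := fun i => ¬(lam i = Symb.o ∨ lam i = Symb.x)) (b0 - 1)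
        omega
      have hi3 : ∀ q, i1 < q → q < b0 → lam q = Symb.o ∨ lam q = Symb.x := by
        intro q h1 h2
        have := Nat.findGreatest_is_greatest (P := fun i => ¬(lam i = Symb.o ∨ lam i = Symb.x))
          (n := b0 - 1) (k := q) (by omega) (by omega)
        exact not_not.mp this
      rcases Nat.eq_or_lt_of_le hi1a with heq | hlt
      · -- i1 = a0 : type D move at (a0, b0)
        have hneigh : Neigh lam a0 b0 := ⟨hb1, fun k h1 h2 => hi3 k (by omega) h2⟩
        exact concludeD hla hld hlz hmz hsb' hNl hN0 H hneigh hpre ha1 hb2 htfa0 hk2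
      · -- a0 < i1 : type A move at (i1, b0)
        have ha0ps : a0 = ps := by
          by_contra hc
          have h : a0 < ps := by omega
          have hbps : b0 ≤ ps := Nat.find_min' hbex ⟨h, hlps⟩
          rcases hall i1 (by omega) with h1 | h1 | h1
          · exact hi1spec (Or.inl h1)
          · exact hi1spec (Or.inr h1)
          · exact (hbmin i1 hi1b) ⟨hlt, h1⟩
        have hlami1 : lam i1 = Symb.dn := by
          cases hl : lam i1
          · exact absurd (Or.inr hl) hi1spec
          · exact absurd (Or.inl hl) hi1spec
          · rfl
          · exact absurd ⟨hlt, hl⟩ (hbmin i1 hi1b)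
          · exact absurd (hld i1 hl) (by omega)
        have hneigh : Neigh lam i1 b0 := ⟨hi1b, fun k h1 h2 => hi3 k h1 h2⟩
        have htfi1 : 1 ≤ tf lam mu i1 := by
          have hmono : tf lam mu ps ≤ tf lam mu i1 := by
            apply tf_mono hoxo hoxx hld i1 (by omega)
            intro q h1 h2 hq
            exact hbmin q (by omega) ⟨by omega, hq⟩
          omega
        exact concludeA hla hld hlz hmz hsb' hNl hN0 H hneigh hlami1 hb2 htfi1


lemma backward_main {mu : WD} {N : ℕ}
    (hma : Admissible mu) (hmd : DiaOnlyZero mu) (hmz : ZeroConstraint mu)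
    (hNm : IsBound mu N) (hN0 : 0 < N) :
    ∀ n (lam : WD), Admissible lam → DiaOnlyZero lam → ZeroConstraint lam →
      SameBlock lam mu → IsBound lam N → (∀ i, 0 ≤ lstat lam mu i) →
      (∑ p ∈ Finset.range N, (lstat lam mu p).toNat) ≤ n → BruhatLE lam mu := by
  intro n
  induction n with
  | zero =>
    intro lam h1 h2 h3 h4 h5 h6 hmeas
    by_cases he : lam = mu
    · rw [he]
      exact Relation.ReflTransGen.refl
    · obtain ⟨lam', _, _, _, _, _, _, _, g8⟩ :=
        step_exists h1 h2 h3 hma hmd hmz h4 h5 hNm hN0 h6 he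
      omega
  | succ n ih =>
    intro lam h1 h2 h3 h4 h5 h6 hmeas
    by_cases he : lam = mu
    · rw [he]
      exact Relation.ReflTransGen.refl
    · obtain ⟨lam', gmv, g1, g2, g3, g4, g5, g6, g8⟩ :=
        step_exists h1 h2 h3 hma hmd hmz h4 h5 hNm hN0 h6 he
      exact Relation.ReflTransGen.head gmv (ih lam' g1 g2 g3 g5 g4 g6 (by omega))


end Aux

/-- `λ ≤ μ` in the Bruhat order iff `l_i(λ,μ) ≥ 0` for all `i ≥ 0`. -/
theorem bruhatLE_iff_lstat_nonneg (lam mu : WD)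
    (hl0 : DiaOnlyZero lam) (hm0 : DiaOnlyZero mu)
    (hlz : ZeroConstraint lam) (hmz : ZeroConstraint mu)
    (hla : Admissible lam) (hma : Admissible mu) (hb : SameBlock lam mu) :
    BruhatLE lam mu ↔ ∀ i : ℕ, 0 ≤ lstat lam mu i := by
  constructor
  · intro h i
    exact Aux.forward mu lam h hla hl0 hlz i
  · intro H
    obtain ⟨N1, hN10, hN1⟩ := Aux.exists_bound hla hl0
    obtain ⟨N2, hN20, hN2⟩ := Aux.exists_bound hma hm0
    have hNl : Aux.IsBound lam (max N1 N2) := fun p hp => hN1 p (le_trans (le_max_left _ _) hp)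
    have hNm : Aux.IsBound mu (max N1 N2) := fun p hp => hN2 p (le_trans (le_max_right _ _) hp)
    have hN0 : 0 < max N1 N2 := lt_of_lt_of_le hN10 (le_max_left _ _)
    exact Aux.backward_main hma hm0 hmz hNm hN0 _ lam hla hl0 hlz hb hNl H (le_refl _)
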